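/- arXiv:1201.0822 — 3 statements merged into one kernel-verified Lean document; each statement's English description precedes it below -/
import Mathlib

section
/- As g → ∞, the probability that two independently uniformly chosen maximal isotropic subspaces of a 2g-dimensional symplectic F_q-vector space intersect trivially converges to ∏_{i=1}^∞ (1+q^{−i})^{−1}. -/
set_option linter.unusedSectionVars false
set_option maxHeartbeats 1000000

open Module Filter

/-- The standard nondegenerate alternating form on `F^{2g} = (Fin g ⊕ Fin g) → F`. -/
def stdForm (F : Type*) [CommRing F] (g : ℕ) (x y : (Fin g ⊕ Fin g) → F) : F :=
  ∑ i : Fin g, (x (Sum.inl i) * y (Sum.inr i) - x (Sum.inr i) * y (Sum.inl i))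

/-- A maximal isotropic subspace of the standard symplectic space `F^{2g}`. -/
def IsLagrangian (F : Type*) [Field F] (g : ℕ)
    (L : Submodule F ((Fin g ⊕ Fin g) → F)) : Prop :=
  Module.finrank F L = g ∧ ∀ x ∈ L, ∀ y ∈ L, stdForm F g x y = 0

namespace Stmt6

/-- counting via constant fibers -/
lemma card_eq_mul_of_fibers {α β : Type*} [Finite α] [Finite β] (p : α → β) (c : ℕ)
    (h : ∀ b : β, Nat.card {a // p a = b} = c) : Nat.card α = Nat.card β * c := by
  classical
  cases nonempty_fintype α; cases nonempty_fintype β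
  rw [Nat.card_eq_fintype_card, Nat.card_eq_fintype_card,
    ← Fintype.card_congr (Equiv.sigmaFiberEquiv p), Fintype.card_sigma]
  have : ∀ b : β, Fintype.card {a // p a = b} = c := by
    intro b; rw [← Nat.card_eq_fintype_card]; exact h b
  simp [this, Finset.sum_const, mul_comm]

variable {F : Type*} [Field F] [Fintype F]

section Generic

variable {V : Type*} [AddCommGroup V] [Module F V] [Fintype V]

open LinearMap LinearMap.BilinForm

/-- span of pairwise-orthogonal vectors is isotropic -/
lemma span_isotropic (B : LinearMap.BilinForm F V) {ι : Type*} {f : ι → V}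
    (hf : ∀ i j, B (f i) (f j) = 0) :
    ∀ x ∈ Submodule.span F (Set.range f), ∀ y ∈ Submodule.span F (Set.range f), B x y = 0 := by
  intro x hx y hy
  induction hx, hy using Submodule.span_induction₂ with
  | mem_mem x y hx hy =>
    obtain ⟨i, rfl⟩ := hx; obtain ⟨j, rfl⟩ := hy; exact hf i j
  | zero_left y hy => simp
  | zero_right x hx => simp
  | add_left x y z hx hy hz h1 h2 => simp [h1, h2]
  | add_right x y z hx hy hz h1 h2 => simp [h1, h2]
  | smul_left r x y hx hy h => simp [h]
  | smul_right r x y hx hy h => simp [h]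

/-- Counting linearly independent pairwise-isotropic tuples. -/
lemma card_isoTuples (B : LinearMap.BilinForm F V) (hB : B.IsAlt) (d : ℕ → ℕ) (k : ℕ)
    (hd : ∀ j : ℕ, j < k → ∀ f : Fin j → V, LinearIndependent F f →
      (∀ i i', B (f i) (f i') = 0) →
      finrank F (B.orthogonal (Submodule.span F (Set.range f))) = d j) :
    Nat.card {f : Fin k → V // LinearIndependent F f ∧ ∀ i j, B (f i) (f j) = 0}
      = ∏ j ∈ Finset.range k, (Fintype.card F ^ d j - Fintype.card F ^ j) := by
  induction k with
  | zero =>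
    rw [Finset.prod_range_zero]
    haveI : Unique {f : Fin 0 → V // LinearIndependent F f ∧ ∀ i j, B (f i) (f j) = 0} :=
      ⟨⟨⟨fun i => i.elim0, linearIndependent_empty_type, fun i => i.elim0⟩⟩,
        fun x => Subtype.ext (funext fun i => i.elim0)⟩
    exact Nat.card_unique
  | succ k ih =>
    have key : ∀ f : Fin (k + 1) → V,
        (LinearIndependent F f ∧ ∀ i j, B (f i) (f j) = 0) ↔
        ((LinearIndependent F (Fin.init f) ∧
            ∀ i j, B (Fin.init f i) (Fin.init f j) = 0) ∧
          (f (Fin.last k) ∈ B.orthogonal (Submodule.span F (Set.range (Fin.init f))) ∧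
            f (Fin.last k) ∉ Submodule.span F (Set.range (Fin.init f)))) := by
      intro f
      constructor
      · rintro ⟨h1, h2⟩
        rw [← Fin.snoc_init_self f, linearIndependent_fin_snoc] at h1
        refine ⟨⟨h1.1, fun i j => h2 _ _⟩, ?_, h1.2⟩
        intro n hn
        have hle : Submodule.span F (Set.range (Fin.init f)) ≤
            LinearMap.ker (B.flip (f (Fin.last k))) := by
          rw [Submodule.span_le]
          rintro _ ⟨i, rfl⟩
          exact h2 _ _
        exact hle hn
      · rintro ⟨⟨h1, h2⟩, h3, h4⟩
        constructor
        · rw [← Fin.snoc_init_self f]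
          exact linearIndependent_fin_snoc.mpr ⟨h1, h4⟩
        · intro i j
          refine Fin.lastCases ?_ ?_ i <;> [skip; intro i'] <;>
            refine Fin.lastCases ?_ ?_ j <;> try intro j'
          · exact hB _
          · exact hB.isRefl _ _ (h3 _ (Submodule.subset_span ⟨j', rfl⟩))
          · exact h3 _ (Submodule.subset_span ⟨i', rfl⟩)
          · exact h2 i' j'
    set T := fun k : ℕ =>
      {f : Fin k → V // LinearIndependent F f ∧ ∀ i j, B (f i) (f j) = 0} with hT
    have step : Nat.card (T (k + 1)) =
        Nat.card (T k) * (Fintype.card F ^ d k - Fintype.card F ^ k) := by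
      apply card_eq_mul_of_fibers (fun f => (⟨Fin.init f.1, ((key f.1).mp f.2).1⟩ : T k))
      rintro ⟨f₀, hf₀⟩
      set W₀ := Submodule.span F (Set.range f₀) with hW₀
      have hWO : W₀ ≤ B.orthogonal W₀ := by
        intro x hx
        rw [LinearMap.BilinForm.mem_orthogonal_iff]
        intro n hn
        exact span_isotropic B hf₀.2 n hn x hx
      have e : {a : T (k+1) // (⟨Fin.init a.1, ((key a.1).mp a.2).1⟩ : T k) = ⟨f₀, hf₀⟩} ≃
          {v : V // v ∈ B.orthogonal W₀ ∧ v ∉ W₀} := by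
        refine ⟨fun a => ⟨a.1.1 (Fin.last k), ?_⟩, fun v => ⟨⟨Fin.snoc f₀ v.1, ?_⟩, ?_⟩, ?_, ?_⟩
        · have hini : Fin.init a.1.1 = f₀ := congrArg Subtype.val a.2
          have := ((key a.1.1).mp a.1.2).2
          rwa [hini] at this
        · rw [key]
          have hini : Fin.init (Fin.snoc (α := fun _ => V) f₀ v.1) = f₀ := by
            simp
          rw [hini]
          refine ⟨hf₀, ?_, ?_⟩
          · rw [Fin.snoc_last]; exact v.2.1
          · rw [Fin.snoc_last]; exact v.2.2
        · exact Subtype.ext (by simp [Fin.init_snoc])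
        · rintro ⟨⟨a, ha⟩, ha2⟩
          have hini : Fin.init a = f₀ := congrArg Subtype.val ha2
          apply Subtype.ext; apply Subtype.ext
          show Fin.snoc (α := fun _ => V) f₀ (a (Fin.last k)) = a
          rw [← hini, Fin.snoc_init_self]
        · rintro ⟨v, hv⟩
          apply Subtype.ext
          show Fin.snoc (α := fun _ => V) f₀ v (Fin.last k) = v
          rw [Fin.snoc_last]
      rw [Nat.card_congr e]
      have hcards : ∀ W : Submodule F V, Nat.card W = Fintype.card F ^ finrank F W := by
        intro W
        letI : Fintype W := Fintype.ofFinite _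
        rw [Nat.card_eq_fintype_card]
        exact card_eq_pow_finrank (K := F)
      have hWk : finrank F W₀ = k := by
        rw [hW₀, finrank_span_eq_card hf₀.1]
        simp
      have hOk : finrank F (B.orthogonal W₀) = d k :=
        hd k (Nat.lt_succ_self k) f₀ hf₀.1 hf₀.2
      have e2 : {v : V // v ∈ B.orthogonal W₀ ∧ v ∉ W₀} ≃
          ((B.orthogonal W₀ : Set V) \ (W₀ : Set V) : Set V) :=
        Equiv.subtypeEquivRight (by intro v; simp [Set.mem_diff])
      rw [Nat.card_congr e2, Nat.card_coe_set_eq,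
        Set.ncard_diff (by exact_mod_cast hWO)]
      have h1 : (B.orthogonal W₀ : Set V).ncard = Fintype.card F ^ d k := by
        rw [← Nat.card_coe_set_eq]
        have := hcards (B.orthogonal W₀)
        rw [hOk] at this
        exact this
      have h2 : (W₀ : Set V).ncard = Fintype.card F ^ k := by
        rw [← Nat.card_coe_set_eq]
        have := hcards W₀
        rw [hWk] at this
        exact this
      rw [h1, h2]
    rw [step, ih (fun j hj => hd j (Nat.lt_succ_of_lt hj)), Finset.prod_range_succ]

end Generic

section Symplectic

variable (F) (g : ℕ)

abbrev V (g : ℕ) := (Fin g ⊕ Fin g) → F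

/-- the standard form as a bilinear map -/
def B : LinearMap.BilinForm F (V F g) :=
  LinearMap.mk₂ F (stdForm F g)
    (by intros; simp only [stdForm, Pi.add_apply, ← Finset.sum_add_distrib]
        exact Finset.sum_congr rfl fun i _ => by ring)
    (by intros; simp only [stdForm, Pi.smul_apply, smul_eq_mul, Finset.mul_sum]
        exact Finset.sum_congr rfl fun i _ => by ring)
    (by intros; simp only [stdForm, Pi.add_apply, ← Finset.sum_add_distrib]
        exact Finset.sum_congr rfl fun i _ => by ring)
    (by intros; simp only [stdForm, Pi.smul_apply, smul_eq_mul, Finset.mul_sum]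
        exact Finset.sum_congr rfl fun i _ => by ring)

lemma B_apply (x y : V F g) : B F g x y = stdForm F g x y := rfl

lemma B_alt : (B F g).IsAlt := by
  intro x
  rw [B_apply, stdForm]
  exact Finset.sum_eq_zero fun i _ => by ring

lemma B_refl : (B F g).IsRefl := (B_alt F g).isRefl

lemma B_nondeg : (B F g).Nondegenerate := by
  refine (LinearMap.IsRefl.nondegenerate_iff_separatingLeft (B_refl F g)).mpr ?_
  intro x hx
  funext i
  cases i with
  | inl i =>
    have := hx (Pi.single (Sum.inr i) 1)
    rw [B_apply, stdForm] at this
    simpa [Pi.single_apply, Finset.sum_ite_eq'] using this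
  | inr i =>
    have := hx (Pi.single (Sum.inl i) 1)
    rw [B_apply, stdForm] at this
    simpa [Pi.single_apply, Finset.sum_ite_eq'] using this

lemma finrank_V : finrank F (V F g) = 2 * g := by
  simp [finrank_pi, Fintype.card_sum]; ring

variable {F}

lemma card_indep_tuples {W : Type*} [AddCommGroup W] [Module F W] [Fintype W] (n k : ℕ)
    (hW : finrank F W = n) :
    Nat.card {f : Fin k → W // LinearIndependent F f}
      = ∏ j ∈ Finset.range k, (Fintype.card F ^ n - Fintype.card F ^ j) := by
  have e : {f : Fin k → W // LinearIndependent F f ∧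
      ∀ i j, (0 : LinearMap.BilinForm F W) (f i) (f j) = 0} ≃
      {f : Fin k → W // LinearIndependent F f} :=
    Equiv.subtypeEquivRight (by intro f; simp)
  rw [← Nat.card_congr e]
  refine card_isoTuples (0 : LinearMap.BilinForm F W) (fun x => rfl) (fun _ => n) k ?_
  intro j hj f hf hf2
  have : (0 : LinearMap.BilinForm F W).orthogonal (Submodule.span F (Set.range f)) = ⊤ := by
    rw [eq_top_iff]
    intro x _
    rw [LinearMap.BilinForm.mem_orthogonal_iff]
    intro n hn
    rfl
  rw [this, finrank_top, hW]

lemma key_arith (q g j : ℕ) (hj : j < g) :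
    q ^ (2 * g - j) - q ^ j = (q ^ g - q ^ j) * (q ^ (g - j) + 1) := by
  set m := g - j with hm
  have hgm : g = j + m := by omega
  have h2gm : 2 * g - j = j + m + m := by omega
  rw [h2gm, hgm]
  have h1 : q ^ (j + m + m) = q ^ j * q ^ m * q ^ m := by rw [pow_add, pow_add]
  have h2 : q ^ (j + m) = q ^ j * q ^ m := by rw [pow_add]
  rw [h1, h2, Nat.sub_mul]
  have h3 : q ^ j * q ^ m * (q ^ m + 1) = q ^ j * q ^ m * q ^ m + q ^ j * q ^ m := by ring
  have h4 : q ^ j * (q ^ m + 1) = q ^ j * q ^ m + q ^ j := by ring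
  rw [h3, h4]
  generalize q ^ j * q ^ m * q ^ m = X
  generalize hY : q ^ j * q ^ m = Y
  omega

lemma pow_sub_pow_pos (q g j : ℕ) (hq1 : 1 < q) (hj : j < g) : 0 < q ^ g - q ^ j := by
  have : q ^ j < q ^ g := Nat.pow_lt_pow_right hq1 hj
  omega

lemma card_lagrangians (g : ℕ) :
    Nat.card {L : Submodule F (V F g) // IsLagrangian F g L}
      = ∏ j ∈ Finset.range g, (Fintype.card F ^ (g - j) + 1) := by
  classical
  set q := Fintype.card F with hq
  have hq1 : 1 < q := Fintype.one_lt_card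
  -- count isotropic independent g-tuples two ways
  have count1 : Nat.card {f : Fin g → V F g // LinearIndependent F f ∧
      ∀ i j, B F g (f i) (f j) = 0} = ∏ j ∈ Finset.range g, (q ^ (2 * g - j) - q ^ j) := by
    refine card_isoTuples (B F g) (B_alt F g) (fun j => 2 * g - j) g ?_
    intro j hj f hf hf2
    rw [LinearMap.BilinForm.finrank_orthogonal (B_nondeg F g), finrank_V,
      finrank_span_eq_card hf, Fintype.card_fin]
  have count2 : Nat.card {f : Fin g → V F g // LinearIndependent F f ∧
      ∀ i j, B F g (f i) (f j) = 0}
      = Nat.card {L : Submodule F (V F g) // IsLagrangian F g L}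
        * ∏ j ∈ Finset.range g, (q ^ g - q ^ j) := by
    have hspan : ∀ f : {f : Fin g → V F g // LinearIndependent F f ∧
        ∀ i j, B F g (f i) (f j) = 0}, IsLagrangian F g (Submodule.span F (Set.range f.1)) :=
      fun f => ⟨by rw [finrank_span_eq_card f.2.1, Fintype.card_fin],
        span_isotropic (B F g) f.2.2⟩
    apply card_eq_mul_of_fibers (fun f => ⟨Submodule.span F (Set.range f.1), hspan f⟩)
    rintro ⟨L, hL⟩
    letI : Fintype L := Fintype.ofFinite _
    have e : {a : {f : Fin g → V F g // LinearIndependent F f ∧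
        ∀ i j, B F g (f i) (f j) = 0} //
        Submodule.span F (Set.range a.1) = L} ≃ {f : Fin g → L // LinearIndependent F f} := by
      refine ⟨fun a => ⟨fun i => ⟨a.1.1 i, ?_⟩, ?_⟩, fun b => ⟨⟨fun i => (b.1 i : V F g),
        ?_, ?_⟩, ?_⟩, ?_, ?_⟩
      · have hm : (a.1.1 i) ∈ Submodule.span F (Set.range a.1.1) :=
          Submodule.subset_span (Set.mem_range_self i)
        rwa [a.2] at hm
      · exact LinearIndependent.of_comp L.subtype a.1.2.1
      · exact b.2.map' L.subtype (Submodule.ker_subtype L)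
      · intro i j; exact hL.2 _ (b.1 i).2 _ (b.1 j).2
      · have hbi : LinearIndependent F fun i => (b.1 i : V F g) :=
          b.2.map' L.subtype (Submodule.ker_subtype L)
        have hle : Submodule.span F (Set.range fun i => (b.1 i : V F g)) ≤ L := by
          rw [Submodule.span_le]; rintro _ ⟨i, rfl⟩; exact (b.1 i).2
        refine Submodule.eq_of_le_of_finrank_le hle ?_
        rw [finrank_span_eq_card hbi, Fintype.card_fin, hL.1]
      · intro a; apply Subtype.ext; apply Subtype.ext; rfl
      · intro b; apply Subtype.ext; funext i; apply Subtype.ext; rfl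
    have e0 : {a : {f : Fin g → V F g // LinearIndependent F f ∧
        ∀ i j, B F g (f i) (f j) = 0} //
        (⟨Submodule.span F (Set.range a.1), hspan a⟩ :
          {L : Submodule F (V F g) // IsLagrangian F g L}) = ⟨L, hL⟩} ≃
        {a : {f : Fin g → V F g // LinearIndependent F f ∧
          ∀ i j, B F g (f i) (f j) = 0} // Submodule.span F (Set.range a.1) = L} :=
      Equiv.subtypeEquivRight (fun a => Subtype.ext_iff)
    rw [Nat.card_congr (e0.trans e)]
    exact card_indep_tuples g g hL.1
  -- combine
  have key : ∀ j ∈ Finset.range g,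
      q ^ (2 * g - j) - q ^ j = (q ^ g - q ^ j) * (q ^ (g - j) + 1) := fun j hj =>
    key_arith q g j (Finset.mem_range.mp hj)
  have Ppos : 0 < ∏ j ∈ Finset.range g, (q ^ g - q ^ j) :=
    Finset.prod_pos fun j hj => pow_sub_pow_pos q g j hq1 (Finset.mem_range.mp hj)
  have := count1
  rw [count2, Finset.prod_congr rfl key, Finset.prod_mul_distrib] at this
  exact Nat.eq_of_mul_eq_mul_right Ppos (by rw [this]; ring)

lemma lagr_orthogonal {g : ℕ} {P : Submodule F (V F g)} (hP : IsLagrangian F g P) :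
    (B F g).orthogonal P = P := by
  have hle : P ≤ (B F g).orthogonal P := by
    intro x hx
    rw [LinearMap.BilinForm.mem_orthogonal_iff]
    intro n hn
    exact hP.2 n hn x hx
  refine (Submodule.eq_of_le_of_finrank_le hle ?_).symm
  rw [LinearMap.BilinForm.finrank_orthogonal (B_nondeg F g), finrank_V, hP.1]
  omega

lemma exists_lagr_compl {g : ℕ} {P : Submodule F (V F g)} (hP : IsLagrangian F g P) :
    ∃ Q, IsLagrangian F g Q ∧ P ⊓ Q = ⊥ := by
  suffices h : ∀ k, k ≤ g → ∃ Q : Submodule F (V F g), finrank F Q = k ∧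
      (∀ x ∈ Q, ∀ y ∈ Q, B F g x y = 0) ∧ P ⊓ Q = ⊥ by
    obtain ⟨Q, h1, h2, h3⟩ := h g le_rfl
    exact ⟨Q, ⟨h1, h2⟩, h3⟩
  intro k
  induction k with
  | zero =>
    exact fun _ => ⟨⊥, finrank_bot F _, by simp, inf_bot_eq P⟩
  | succ k ih =>
    intro hk1
    obtain ⟨Q, hQrank, hQiso, hQP⟩ := ih (Nat.le_of_succ_le hk1)
    have hkg : k < g := hk1
    have hnotle : ¬ (B F g).orthogonal Q ≤ P ⊔ Q := by
      intro hle
      have h1 : (B F g).orthogonal (P ⊔ Q) ≤ Q := by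
        calc (B F g).orthogonal (P ⊔ Q) ≤ (B F g).orthogonal ((B F g).orthogonal Q) :=
              LinearMap.BilinForm.orthogonal_le hle
        _ = Q := LinearMap.BilinForm.orthogonal_orthogonal (B_nondeg F g) (B_refl F g) Q
      have h2 : (B F g).orthogonal (P ⊔ Q) ≤ P := by
        have := LinearMap.BilinForm.orthogonal_le (B := B F g) (le_sup_left (a := P) (b := Q))
        rwa [lagr_orthogonal hP] at this
      have h3 : (B F g).orthogonal (P ⊔ Q) ≤ P ⊓ Q := le_inf h2 h1
      rw [hQP, le_bot_iff] at h3
      have h4 : finrank F ((B F g).orthogonal (P ⊔ Q)) = 0 := by rw [h3]; exact finrank_bot F _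
      have h5 : finrank F ↥(P ⊔ Q) + finrank F ↥(P ⊓ Q) = g + k := by
        rw [Submodule.finrank_sup_add_finrank_inf_eq, hP.1, hQrank]
      rw [hQP] at h5
      have h6 : finrank F ↥(⊥ : Submodule F (V F g)) = 0 := finrank_bot F _
      rw [LinearMap.BilinForm.finrank_orthogonal (B_nondeg F g), finrank_V] at h4
      omega
    obtain ⟨v, hvO, hvPQ⟩ := SetLike.not_le_iff_exists.mp hnotle
    have hvQ : v ∉ Q := fun h => hvPQ (Submodule.mem_sup_right h)
    have hv0 : v ≠ 0 := fun h => hvQ (h ▸ Q.zero_mem)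
    have hQv : Q ⊓ Submodule.span F {v} = ⊥ := by
      rw [eq_bot_iff]
      intro x hx
      rw [Submodule.mem_inf] at hx
      obtain ⟨hxQ, hxv⟩ := hx
      rw [Submodule.mem_span_singleton] at hxv
      obtain ⟨a, rfl⟩ := hxv
      rcases eq_or_ne a 0 with rfl | ha
      · simp
      · refine absurd ?_ hvQ
        have := Q.smul_mem a⁻¹ hxQ
        rwa [smul_smul, inv_mul_cancel₀ ha, one_smul] at this
    refine ⟨Q ⊔ Submodule.span F {v}, ?_, ?_, ?_⟩
    · have := Submodule.finrank_sup_add_finrank_inf_eq Q (Submodule.span F {v})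
      rw [hQv, hQrank, finrank_span_singleton hv0] at this
      have h6 : finrank F ↥(⊥ : Submodule F (V F g)) = 0 := finrank_bot F _
      omega
    · intro x hx y hy
      rw [Submodule.mem_sup] at hx hy
      obtain ⟨qx, hqx, sx, hsx, rfl⟩ := hx
      obtain ⟨qy, hqy, sy, hsy, rfl⟩ := hy
      rw [Submodule.mem_span_singleton] at hsx hsy
      obtain ⟨a, rfl⟩ := hsx
      obtain ⟨b, rfl⟩ := hsy
      have e1 : B F g qx qy = 0 := hQiso qx hqx qy hqy
      have e2 : B F g qx v = 0 := hvO qx hqx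
      have e3 : B F g v qy = 0 := (B_refl F g) qy v (hvO qy hqy)
      have e4 : B F g v v = 0 := B_alt F g v
      simp only [map_add, map_smul, LinearMap.add_apply, LinearMap.smul_apply, smul_eq_mul,
        e1, e2, e3, e4]
      ring
    · rw [eq_bot_iff]
      intro x hx
      rw [Submodule.mem_inf] at hx
      obtain ⟨hxP, hxQ'⟩ := hx
      rw [Submodule.mem_sup] at hxQ'
      obtain ⟨qx, hqx, sx, hsx, rfl⟩ := hxQ'
      rw [Submodule.mem_span_singleton] at hsx
      obtain ⟨a, rfl⟩ := hsx
      rcases eq_or_ne a 0 with rfl | ha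
      · have : qx ∈ P ⊓ Q := ⟨by simpa using hxP, hqx⟩
        rw [hQP] at this
        simpa using this
      · exfalso
        apply hvPQ
        have : v = a⁻¹ • ((qx + a • v) - qx) := by
          rw [add_sub_cancel_left, smul_smul, inv_mul_cancel₀ ha, one_smul]
        rw [this]
        exact Submodule.smul_mem _ _ (Submodule.sub_mem _
          (Submodule.mem_sup_left hxP) (Submodule.mem_sup_right hqx))

lemma card_symm_matrices (g : ℕ) :
    Nat.card {M : Matrix (Fin g) (Fin g) F // ∀ i j, M i j = M j i}
      = Fintype.card F ^ (∑ j ∈ Finset.range g, (g - j)) := by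
  classical
  have e : {M : Matrix (Fin g) (Fin g) F // ∀ i j, M i j = M j i} ≃
      ({p : Fin g × Fin g // p.1 ≤ p.2} → F) := by
    refine ⟨fun M p => M.1 p.1.1 p.1.2,
      fun f => ⟨Matrix.of fun i j => if h : i ≤ j then f ⟨(i, j), h⟩
        else f ⟨(j, i), le_of_not_ge h⟩, ?_⟩, ?_, ?_⟩
    · intro i j
      by_cases h1 : i ≤ j <;> by_cases h2 : j ≤ i
      · obtain rfl := le_antisymm h1 h2
        rfl
      · simp [Matrix.of_apply, h1, h2]
      · simp [Matrix.of_apply, h1, h2]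
      · exact absurd (le_of_not_ge h1) h2
    · intro M
      apply Subtype.ext
      funext i j
      by_cases h1 : i ≤ j
      · simp [Matrix.of_apply, h1]
      · simp only [Matrix.of_apply, dif_neg h1]
        exact M.2 j i
    · intro f
      funext p
      obtain ⟨⟨i, j⟩, h⟩ := p
      simp [Matrix.of_apply, h]
  rw [Nat.card_congr e, Nat.card_eq_fintype_card, Fintype.card_fun]
  congr 1
  have e2 : {p : Fin g × Fin g // p.1 ≤ p.2} ≃ (Σ i : Fin g, {j : Fin g // i ≤ j}) :=
    ⟨fun p => ⟨p.1.1, p.1.2, p.2⟩, fun x => ⟨(x.1, x.2.1), x.2.2⟩,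
      fun p => rfl, fun x => rfl⟩
  rw [Fintype.card_congr e2, Fintype.card_sigma]
  have h3 : ∀ i : Fin g, Fintype.card {j : Fin g // i ≤ j} = g - i := by
    intro i
    rw [Fintype.card_subtype]
    have : (Finset.univ.filter fun j : Fin g => i ≤ j) = Finset.Ici i := by
      ext j; simp
    rw [this, Fin.card_Ici]
  rw [Finset.sum_congr rfl fun i _ => h3 i]
  exact Fin.sum_univ_eq_sum_range (fun j => g - j) g

def SC (g : ℕ) (P Q₀ : Submodule F (V F g)) (S : ↥Q₀ →ₗ[F] ↥P) : Prop :=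
  ∀ v w : ↥Q₀, B F g (S v : V F g) (w : V F g) = B F g (S w : V F g) (v : V F g)

lemma card_lagr_compl (g : ℕ) (P : Submodule F (V F g)) (hP : IsLagrangian F g P) :
    Nat.card {Q : Submodule F (V F g) // IsLagrangian F g Q ∧ P ⊓ Q = ⊥}
      = Fintype.card F ^ (∑ j ∈ Finset.range g, (g - j)) := by
  classical
  obtain ⟨Q₀, hQ₀, hPQ₀⟩ := exists_lagr_compl hP
  set T : (↥Q₀ →ₗ[F] ↥P) → (↥Q₀ →ₗ[F] V F g) := fun S => Q₀.subtype + P.subtype ∘ₗ S with hT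
  have hTapp : ∀ S v, T S v = (v : V F g) + (S v : V F g) := fun S v => rfl
  have hker : ∀ S, LinearMap.ker (T S) = ⊥ := by
    intro S
    rw [eq_bot_iff]
    intro x hx
    rw [LinearMap.mem_ker, hTapp] at hx
    have h1 : (x : V F g) = -(S x : V F g) := eq_neg_of_add_eq_zero_left hx
    have h2 : (x : V F g) ∈ P ⊓ Q₀ := ⟨by rw [h1]; exact P.neg_mem (S x).2, x.2⟩
    rw [hPQ₀] at h2
    have hx0 : (x : V F g) = 0 := (Submodule.mem_bot F).mp h2
    rw [Submodule.mem_bot]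
    exact Subtype.ext hx0
  have hrank : ∀ S, finrank F (LinearMap.range (T S)) = g := by
    intro S
    rw [LinearMap.finrank_range_of_inj (LinearMap.ker_eq_bot.mp (hker S)), hQ₀.1]
  have hdisj : ∀ S, P ⊓ LinearMap.range (T S) = ⊥ := by
    intro S
    rw [eq_bot_iff]
    intro x hx
    rw [Submodule.mem_inf] at hx
    obtain ⟨hxP, hxR⟩ := hx
    rw [LinearMap.mem_range] at hxR
    obtain ⟨v, hv⟩ := hxR
    have h1 : (v : V F g) ∈ P := by
      have hh : (v : V F g) = x - (S v : V F g) := by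
        rw [← hv, hTapp]; abel
      rw [hh]; exact P.sub_mem hxP (S v).2
    have h2 : (v : V F g) ∈ P ⊓ Q₀ := ⟨h1, v.2⟩
    rw [hPQ₀] at h2
    have hv0 : v = (0 : ↥Q₀) := Subtype.ext ((Submodule.mem_bot F).mp h2)
    rw [← hv, hv0]
    simp
  have hform : ∀ S (v w : ↥Q₀), B F g (T S v) (T S w)
      = B F g (S v : V F g) (w : V F g) - B F g (S w : V F g) (v : V F g) := by
    intro S v w
    rw [hTapp, hTapp]
    have e1 : B F g (v : V F g) (w : V F g) = 0 := hQ₀.2 _ v.2 _ w.2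
    have e4 : B F g (S v : V F g) (S w : V F g) = 0 := hP.2 _ (S v).2 _ (S w).2
    have e2 : B F g (v : V F g) (S w : V F g) = -(B F g (S w : V F g) (v : V F g)) :=
((B_alt F g).neg_eq _ _).symm
    simp only [map_add, LinearMap.add_apply, e1, e4, e2]
    ring
  have hlagr_iff : ∀ S, (IsLagrangian F g (LinearMap.range (T S)) ∧
      P ⊓ LinearMap.range (T S) = ⊥) ↔ SC g P Q₀ S := by
    intro S
    constructor
    · rintro ⟨⟨_, hiso⟩, _⟩ v w
      have h0 : B F g (T S v) (T S w) = 0 :=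
        hiso _ (LinearMap.mem_range_self _ v) _ (LinearMap.mem_range_self _ w)
      rw [hform] at h0
      exact sub_eq_zero.mp h0
    · intro hSC
      refine ⟨⟨hrank S, ?_⟩, hdisj S⟩
      intro x hx y hy
      rw [LinearMap.mem_range] at hx hy
      obtain ⟨v, rfl⟩ := hx
      obtain ⟨w, rfl⟩ := hy
      show B F g (T S v) (T S w) = 0
      rw [hform, hSC v w, sub_self]
  have hbij : Function.Bijective (fun S : {S : ↥Q₀ →ₗ[F] ↥P // SC g P Q₀ S} =>
      (⟨LinearMap.range (T S.1), (hlagr_iff S.1).mpr S.2⟩ :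
        {Q : Submodule F (V F g) // IsLagrangian F g Q ∧ P ⊓ Q = ⊥})) := by
    constructor
    · rintro ⟨S, hS⟩ ⟨S', hS'⟩ h
      have hr : LinearMap.range (T S) = LinearMap.range (T S') := congrArg Subtype.val h
      apply Subtype.ext
      apply Basis.ext (Module.finBasisOfFinrankEq F _ hQ₀.1)
      intro i
      set v := Module.finBasisOfFinrankEq F ↥Q₀ hQ₀.1 i with hv
      have h1 : T S v ∈ LinearMap.range (T S') := by
        rw [← hr]; exact LinearMap.mem_range_self _ v
      rw [LinearMap.mem_range] at h1
      obtain ⟨w, hw⟩ := h1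
      rw [hTapp, hTapp] at hw
      have h2 : (v : V F g) - w = (S' w : V F g) - (S v : V F g) :=
        sub_eq_sub_iff_add_eq_add.mpr ((hw.symm).trans (add_comm _ _))
      have h3 : (v : V F g) - w ∈ P ⊓ Q₀ :=
        ⟨by rw [h2]; exact P.sub_mem (S' w).2 (S v).2, Q₀.sub_mem v.2 w.2⟩
      rw [hPQ₀] at h3
      have h4 : (v : V F g) - w = 0 := (Submodule.mem_bot F).mp h3
      have h5 : (S' w : V F g) - S v = 0 := by rw [← h2, h4]
      have h6 : w = v := Subtype.ext (sub_eq_zero.mp h4).symm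
      rw [h6] at h5
      exact (Subtype.ext (sub_eq_zero.mp h5)).symm
    · rintro ⟨Q, hQ, hPQ⟩
      have htop : P ⊔ Q = ⊤ := by
        apply Submodule.eq_top_of_finrank_eq
        have h5 := Submodule.finrank_sup_add_finrank_inf_eq P Q
        rw [hPQ, hP.1, hQ.1] at h5
        have h6 : finrank F ↥(⊥ : Submodule F (V F g)) = 0 := finrank_bot F _
        rw [finrank_V]
        omega
      have hc : IsCompl P Q := ⟨disjoint_iff.mpr hPQ, codisjoint_iff.mpr htop⟩
      set π := Submodule.projectionOnto P Q hc with hπ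
      set S : ↥Q₀ →ₗ[F] ↥P := -(π ∘ₗ Q₀.subtype) with hS
      have hSapp : ∀ v : ↥Q₀, (S v : V F g) = -(π (v : V F g) : V F g) := fun v => rfl
      have hrle : LinearMap.range (T S) ≤ Q := by
        rintro x hx
        rw [LinearMap.mem_range] at hx
        obtain ⟨v, rfl⟩ := hx
        have h7 : T S v = (v : V F g) - (π (v : V F g) : V F g) := by
          rw [hTapp, hSapp, ← sub_eq_add_neg]
        rw [h7]
        have h8 : π ((v : V F g) - (π (v : V F g) : V F g)) = 0 := by
          rw [map_sub, hπ, Submodule.projectionOnto_apply_left hc]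
          exact sub_self _
        have h9 := LinearMap.mem_ker.mpr h8
        rwa [hπ, Submodule.ker_projectionOnto hc] at h9
      have hrange : LinearMap.range (T S) = Q :=
        Submodule.eq_of_le_of_finrank_le hrle (by rw [hrank S, hQ.1])
      have hSC : SC g P Q₀ S := (hlagr_iff S).mp (by rw [hrange]; exact ⟨hQ, hPQ⟩)
      exact ⟨⟨S, hSC⟩, Subtype.ext hrange⟩
  rw [← Nat.card_congr (Equiv.ofBijective _ hbij)]
  set bQ : Basis (Fin g) F ↥Q₀ := Module.finBasisOfFinrankEq F _ hQ₀.1 with hbQ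
  set Φ : (↥Q₀ →ₗ[F] ↥P) →ₗ[F] Matrix (Fin g) (Fin g) F :=
    { toFun := fun S => Matrix.of fun i j => B F g (S (bQ i) : V F g) (bQ j : V F g)
      map_add' := by
        intro S S'
        funext i j
        simp [Matrix.add_apply]
      map_smul' := by
        intro c S
        funext i j
        simp [Matrix.smul_apply] } with hΦ
  have hΦapp : ∀ S i j, Φ S i j = B F g (S (bQ i) : V F g) (bQ j : V F g) := fun S i j => rfl
  have hΦker : ∀ S : ↥Q₀ →ₗ[F] ↥P, Φ S = 0 → S = 0 := by
    intro S hS0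
    have hij : ∀ i j, B F g (S (bQ i) : V F g) (bQ j : V F g) = 0 := by
      intro i j
      have h1 := congrFun (congrFun (congrArg (fun M => (M : Matrix (Fin g) (Fin g) F)) hS0) i) j
      simpa [hΦapp] using h1
    have hi : ∀ i, S (bQ i) = 0 := by
      intro i
      have hφ : ((B F g).flip ((S (bQ i) : V F g))) ∘ₗ Q₀.subtype = 0 := by
        apply Basis.ext bQ
        intro j
        simp only [LinearMap.comp_apply, LinearMap.flip_apply, LinearMap.zero_apply,
          Submodule.coe_subtype]
        exact (B_refl F g) _ _ (hij i j)
      have hmem : (S (bQ i) : V F g) ∈ (B F g).orthogonal Q₀ := by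
        rw [LinearMap.BilinForm.mem_orthogonal_iff]
        intro n hn
        have h2 := LinearMap.congr_fun hφ ⟨n, hn⟩
        simpa using h2
      rw [lagr_orthogonal hQ₀] at hmem
      have h2 : (S (bQ i) : V F g) ∈ P ⊓ Q₀ := ⟨(S (bQ i)).2, hmem⟩
      rw [hPQ₀] at h2
      exact Subtype.ext ((Submodule.mem_bot F).mp h2)
    apply Basis.ext bQ
    intro i
    rw [hi i]
    simp
  have hΦinj : Function.Injective Φ := by
    intro a b hab
    exact sub_eq_zero.mp (hΦker (a - b) (by rw [Φ.map_sub a b, hab, sub_self]))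
  have hΦsurj : Function.Surjective Φ := by
    rw [← LinearMap.range_eq_top]
    apply Submodule.eq_top_of_finrank_eq
    rw [LinearMap.finrank_range_of_inj hΦinj, Module.finrank_linearMap, hQ₀.1, hP.1,
      Module.finrank_matrix]
    simp
  have hsym_iff : ∀ S, SC g P Q₀ S ↔ ∀ i j, Φ S i j = Φ S j i := by
    intro S
    constructor
    · intro h i j
      rw [hΦapp, hΦapp]
      exact h (bQ i) (bQ j)
    · intro h
      have hβ : ((B F g).compl₁₂ (P.subtype ∘ₗ S) Q₀.subtype) =
          ((B F g).compl₁₂ (P.subtype ∘ₗ S) Q₀.subtype).flip := by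
        apply Basis.ext bQ; intro i; apply Basis.ext bQ; intro j
        simp only [LinearMap.compl₁₂_apply, LinearMap.flip_apply, LinearMap.comp_apply,
          Submodule.coe_subtype]
        have h3 := h i j
        rwa [hΦapp, hΦapp] at h3
      intro v w
      have h2 := LinearMap.congr_fun (LinearMap.congr_fun hβ v) w
      simpa [LinearMap.compl₁₂_apply, LinearMap.flip_apply] using h2
  have e2 : {S : ↥Q₀ →ₗ[F] ↥P // SC g P Q₀ S} ≃
      {M : Matrix (Fin g) (Fin g) F // ∀ i j, M i j = M j i} :=
    (Equiv.ofBijective Φ ⟨hΦinj, hΦsurj⟩).subtypeEquiv (fun S => by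
      exact hsym_iff S)
  rw [Nat.card_congr e2, card_symm_matrices]

lemma card_pairs (g : ℕ) :
    Nat.card {P : Submodule F (V F g) × Submodule F (V F g) //
        IsLagrangian F g P.1 ∧ IsLagrangian F g P.2 ∧ P.1 ⊓ P.2 = ⊥}
      = Nat.card {L : Submodule F (V F g) // IsLagrangian F g L}
        * Fintype.card F ^ (∑ j ∈ Finset.range g, (g - j)) := by
  classical
  have hfst : ∀ x : {P : Submodule F (V F g) × Submodule F (V F g) //
      IsLagrangian F g P.1 ∧ IsLagrangian F g P.2 ∧ P.1 ⊓ P.2 = ⊥},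
      IsLagrangian F g x.1.1 := fun x => x.2.1
  apply card_eq_mul_of_fibers (fun x => ⟨x.1.1, hfst x⟩)
  rintro ⟨P, hP⟩
  have e : {a : {P : Submodule F (V F g) × Submodule F (V F g) //
      IsLagrangian F g P.1 ∧ IsLagrangian F g P.2 ∧ P.1 ⊓ P.2 = ⊥} //
      (⟨a.1.1, hfst a⟩ : {L : Submodule F (V F g) // IsLagrangian F g L}) = ⟨P, hP⟩} ≃
      {Q : Submodule F (V F g) // IsLagrangian F g Q ∧ P ⊓ Q = ⊥} := by
    refine ⟨fun a => ⟨a.1.1.2, a.1.2.2.1, ?_⟩,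
      fun Q => ⟨⟨(P, Q.1), hP, Q.2.1, Q.2.2⟩, rfl⟩, ?_, ?_⟩
    · have hv : a.1.1.1 = P := congrArg Subtype.val a.2
      have h := a.1.2.2.2
      rwa [hv] at h
    · rintro ⟨⟨⟨P1, Q1⟩, h⟩, ha⟩
      have hv : P1 = P := congrArg Subtype.val ha
      subst hv
      rfl
    · intro Q
      rfl
  rw [Nat.card_congr e]
  exact card_lagr_compl g P hP

end Symplectic

end Stmt6

/-- As `g → ∞`, the probability that two independently uniformly chosen maximal isotropic
subspaces of a `2g`-dimensional symplectic `F_q`-vector space intersect trivially converges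
to `∏_{i=1}^∞ (1+q^{−i})^{−1}`. -/
theorem stmt6 (F : Type*) [Field F] [Fintype F] :
    Tendsto (fun g : ℕ =>
      (Nat.card {P : Submodule F ((Fin g ⊕ Fin g) → F) × Submodule F ((Fin g ⊕ Fin g) → F) //
          IsLagrangian F g P.1 ∧ IsLagrangian F g P.2 ∧ P.1 ⊓ P.2 = ⊥} : ℝ) /
        (Nat.card {L : Submodule F ((Fin g ⊕ Fin g) → F) // IsLagrangian F g L} : ℝ) ^ 2)
      atTop
      (nhds (∏' i : ℕ, (1 + (Fintype.card F : ℝ)⁻¹ ^ (i + 1))⁻¹)) := by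
  classical
  have hq1 : (1 : ℕ) < Fintype.card F := Fintype.one_lt_card
  set q : ℝ := (Fintype.card F : ℝ) with hq
  have hq1' : (1 : ℝ) < q := by rw [hq]; exact_mod_cast hq1
  have hqpos : (0 : ℝ) < q := lt_trans one_pos hq1'
  have hratio : ∀ g : ℕ,
      (Nat.card {P : Submodule F ((Fin g ⊕ Fin g) → F) × Submodule F ((Fin g ⊕ Fin g) → F) //
          IsLagrangian F g P.1 ∧ IsLagrangian F g P.2 ∧ P.1 ⊓ P.2 = ⊥} : ℝ) /
        (Nat.card {L : Submodule F ((Fin g ⊕ Fin g) → F) // IsLagrangian F g L} : ℝ) ^ 2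
      = ∏ j ∈ Finset.range g, (1 + q⁻¹ ^ (j + 1))⁻¹ := by
    intro g
    rw [Stmt6.card_pairs g, Stmt6.card_lagrangians g]
    have hterm_pos : ∀ j : ℕ, (0 : ℝ) < q ^ (g - j) + 1 := by
      intro j; positivity
    have hNpos : (0 : ℝ) < ∏ j ∈ Finset.range g, (q ^ (g - j) + 1) :=
      Finset.prod_pos fun j _ => hterm_pos j
    push_cast
    have hNpos' : (∏ j ∈ Finset.range g, (q ^ (g - j) + 1)) ≠ 0 := ne_of_gt hNpos
    rw [sq, mul_div_mul_left _ _ hNpos', ← Finset.prod_pow_eq_pow_sum,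
      ← Finset.prod_div_distrib]
    have hGterm : ∀ m : ℕ, q ^ m / (q ^ m + 1) = (1 + q⁻¹ ^ m)⁻¹ := by
      intro m
      have hm : (0 : ℝ) < q ^ m := by positivity
      rw [inv_pow]
      have h1 : (1 + (q ^ m)⁻¹) = (q ^ m + 1) / q ^ m := by
        field_simp
      rw [h1, inv_div]
    calc ∏ j ∈ Finset.range g, q ^ (g - j) / (q ^ (g - j) + 1)
        = ∏ j ∈ Finset.range g, (1 + q⁻¹ ^ ((g - 1 - j) + 1))⁻¹ := by
          refine Finset.prod_congr rfl fun j hj => ?_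
          rw [Finset.mem_range] at hj
          have hgj : g - 1 - j + 1 = g - j := by omega
          rw [hGterm, hgj]
      _ = ∏ j ∈ Finset.range g, (1 + q⁻¹ ^ (j + 1))⁻¹ :=
          Finset.prod_range_reflect (fun j => (1 + q⁻¹ ^ (j + 1))⁻¹) g
  have hinvq : q⁻¹ < 1 := inv_lt_one_of_one_lt₀ hq1'
  have hinvq0 : (0 : ℝ) ≤ q⁻¹ := by positivity
  have hsum : Summable fun n : ℕ => q⁻¹ ^ (n + 1) := by
    have h := (summable_geometric_of_lt_one hinvq0 hinvq).mul_right q⁻¹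
    refine h.congr fun n => ?_
    rw [pow_succ]
  have hlog : Summable fun n : ℕ => Real.log ((1 + q⁻¹ ^ (n + 1))⁻¹) := by
    have h1 : Summable fun n : ℕ => Real.log (1 + q⁻¹ ^ (n + 1)) := by
      refine Summable.of_nonneg_of_le (fun n => Real.log_nonneg ?_) (fun n => ?_) hsum
      · have h2 : (0 : ℝ) ≤ q⁻¹ ^ (n + 1) := by positivity
        linarith
      · have hpos : (0 : ℝ) < 1 + q⁻¹ ^ (n + 1) := by positivity
        have := Real.log_le_sub_one_of_pos hpos
        linarith
    refine (h1.neg).congr fun n => ?_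
    rw [Real.log_inv]
  have hmul : Multipliable fun n : ℕ => (1 + q⁻¹ ^ (n + 1))⁻¹ := by
    exact Real.multipliable_of_summable_log (fun n => by positivity) hlog
  have htend := hmul.hasProd.tendsto_prod_nat
  exact htend.congr fun g => (hratio g).symm
end

section
/- The identity ∏_{i=1}^∞ (1+q^{−i})^{−1} = ∏_{j=1}^∞ (1−q^{1−2j}) holds for every real q > 1. -/
open Filter Finset Real

section aux

variable {x : ℝ}

private lemma euler_neg_log_one_sub_le {t : ℝ} (ht0 : 0 ≤ t) (htx : t ≤ x) (hx1 : x < 1) :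
    -Real.log (1 - t) ≤ t / (1 - x) := by
  have h1t : 0 < 1 - t := by linarith
  have h1x : 0 < 1 - x := by linarith
  rw [show -Real.log (1 - t) = Real.log (1 - t)⁻¹ by rw [Real.log_inv]]
  have h2 : Real.log (1 - t)⁻¹ ≤ (1 - t)⁻¹ - 1 :=
    Real.log_le_sub_one_of_pos (by positivity)
  have h3 : (1 - t)⁻¹ - 1 = t / (1 - t) := by field_simp; ring
  have h4 : t / (1 - t) ≤ t / (1 - x) := by
    apply div_le_div_of_nonneg_left ht0 h1x; linarith
  linarith

private lemma euler_summable_geo (hx0 : 0 < x) (hx1 : x < 1) :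
    Summable fun n : ℕ => x ^ (n + 1) := by
  simpa [pow_succ, mul_comm] using (summable_geometric_of_lt_one hx0.le hx1).mul_left x

private lemma euler_summable_log_add (hx0 : 0 < x) (hx1 : x < 1) :
    Summable fun n : ℕ => Real.log (1 + x ^ (n + 1)) := by
  apply Summable.of_nonneg_of_le (fun n => Real.log_nonneg (le_add_of_nonneg_right (by positivity))) _
    (euler_summable_geo hx0 hx1)
  intro n
  have := Real.log_le_sub_one_of_pos (x := 1 + x ^ (n + 1)) (by positivity)
  linarith

private lemma euler_summable_log_sub (hx0 : 0 < x) (hx1 : x < 1)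
    (k : ℕ → ℕ) (hk : ∀ n, n ≤ k n) :
    Summable fun n : ℕ => Real.log (1 - x ^ (k n + 1)) := by
  rw [← summable_neg_iff]
  apply Summable.of_nonneg_of_le _ _ ((euler_summable_geo hx0 hx1).div_const (1 - x))
  · intro n
    have h1 : x ^ (k n + 1) < 1 := pow_lt_one₀ hx0.le hx1 (Nat.succ_ne_zero _)
    simp only [neg_nonneg]
    have : (0:ℝ) ≤ x ^ (k n + 1) := by positivity
    exact Real.log_nonpos (by linarith) (by linarith)
  · intro n
    have hle : x ^ (k n + 1) ≤ x ^ (n + 1) :=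
      pow_le_pow_of_le_one hx0.le hx1.le (by have := hk n; omega)
    have h1 : x ^ (k n + 1) ≤ x := by
      calc x ^ (k n + 1) ≤ x ^ (0 + 1) := pow_le_pow_of_le_one hx0.le hx1.le (by omega)
        _ = x := by ring
    have := euler_neg_log_one_sub_le (t := x ^ (k n + 1)) (by positivity) h1 hx1
    calc -Real.log (1 - x ^ (k n + 1)) ≤ x ^ (k n + 1) / (1 - x) := this
      _ ≤ x ^ (n + 1) / (1 - x) := by gcongr

private lemma euler_finite_id (x : ℝ) (N : ℕ) :
    (∏ n ∈ range N, (1 + x ^ (n + 1))) * (∏ n ∈ range N, (1 - x ^ (2 * n + 1))) *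
      (∏ n ∈ range N, (1 - x ^ (n + 1))) = ∏ m ∈ range (2 * N), (1 - x ^ (m + 1)) := by
  induction N with
  | zero => simp
  | succ N ih =>
    rw [prod_range_succ, prod_range_succ, prod_range_succ,
      show 2 * (N + 1) = 2 * N + 1 + 1 by ring, prod_range_succ, prod_range_succ]
    linear_combination ((1 + x ^ (N + 1)) * (1 - x ^ (2 * N + 1)) * (1 - x ^ (N + 1))) * ih

end aux

/-- Euler's identity `∏_{i=1}^∞ (1+q^{−i})^{−1} = ∏_{j=1}^∞ (1−q^{1−2j})` for real `q > 1`
(the common value is the Malle–Garton constant). -/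
theorem stmt7 (q : ℝ) (hq : 1 < q) :
    (∏' i : ℕ, (1 + q⁻¹ ^ (i + 1))⁻¹) = ∏' j : ℕ, (1 - q⁻¹ ^ (2 * (j + 1) - 1)) := by
  set x : ℝ := q⁻¹ with hxdef
  have hx0 : 0 < x := inv_pos.mpr (by linarith)
  have hx1 : x < 1 := by
    rw [hxdef]
    exact inv_lt_one_of_one_lt₀ hq
  have hpowlt : ∀ k : ℕ, x ^ (k + 1) < 1 := fun k => pow_lt_one₀ hx0.le hx1 (Nat.succ_ne_zero k)
  -- summabilities of logs
  have hSadd := euler_summable_log_add hx0 hx1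
  have hSsub1 : Summable fun n : ℕ => Real.log (1 - x ^ (n + 1)) := by
    simpa using euler_summable_log_sub hx0 hx1 id (fun n => le_rfl)
  have hSsub2 : Summable fun n : ℕ => Real.log (1 - x ^ (2 * n + 1)) := by
    simpa using euler_summable_log_sub hx0 hx1 (fun n => 2 * n) (fun n => Nat.le_mul_of_pos_left n (by norm_num))
  have hSaddinv : Summable fun n : ℕ => Real.log (1 + x ^ (n + 1))⁻¹ := by
    simpa [Real.log_inv] using hSadd.neg
  -- positivity of all factors
  have hposadd : ∀ (_ : Unit) (n : ℕ), (0:ℝ) < 1 + x ^ (n + 1) := fun _ n => by positivity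
  have hposaddinv : ∀ (_ : Unit) (n : ℕ), (0:ℝ) < (1 + x ^ (n + 1))⁻¹ := fun _ n => by positivity
  have hpossub1 : ∀ (_ : Unit) (n : ℕ), (0:ℝ) < 1 - x ^ (n + 1) := fun _ n => by
    have := hpowlt n; linarith
  have hpossub2 : ∀ (_ : Unit) (n : ℕ), (0:ℝ) < 1 - x ^ (2 * n + 1) := fun _ n => by
    have := hpowlt (2 * n); linarith
  -- multipliability
  have MP : Multipliable fun n : ℕ => 1 + x ^ (n + 1) :=
    Real.multipliable_of_summable_log (hposadd ()) hSadd
  have MQ : Multipliable fun n : ℕ => 1 - x ^ (2 * n + 1) :=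
    Real.multipliable_of_summable_log (hpossub2 ()) hSsub2
  have ML : Multipliable fun n : ℕ => 1 - x ^ (n + 1) :=
    Real.multipliable_of_summable_log (hpossub1 ()) hSsub1
  -- products as exponentials
  have hPexp : (∏' n : ℕ, (1 + x ^ (n + 1))) = Real.exp (∑' n : ℕ, Real.log (1 + x ^ (n + 1))) :=
    (Real.rexp_tsum_eq_tprod (hposadd ()) hSadd).symm
  have hPinvexp : (∏' n : ℕ, (1 + x ^ (n + 1))⁻¹) =
      Real.exp (∑' n : ℕ, Real.log (1 + x ^ (n + 1))⁻¹) :=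
    (Real.rexp_tsum_eq_tprod (hposaddinv ()) hSaddinv).symm
  have hLexp : (∏' n : ℕ, (1 - x ^ (n + 1))) = Real.exp (∑' n : ℕ, Real.log (1 - x ^ (n + 1))) :=
    (Real.rexp_tsum_eq_tprod (hpossub1 ()) hSsub1).symm
  set P : ℝ := ∏' n : ℕ, (1 + x ^ (n + 1)) with hPdef
  set Q : ℝ := ∏' n : ℕ, (1 - x ^ (2 * n + 1)) with hQdef
  set L : ℝ := ∏' n : ℕ, (1 - x ^ (n + 1)) with hLdef
  have hP0 : 0 < P := hPexp ▸ Real.exp_pos _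
  have hL0 : 0 < L := hLexp ▸ Real.exp_pos _
  -- the inverse product is P⁻¹
  have hPinv : (∏' n : ℕ, (1 + x ^ (n + 1))⁻¹) = P⁻¹ := by
    rw [hPinvexp, hPexp]
    rw [show (fun n : ℕ => Real.log (1 + x ^ (n + 1))⁻¹) =
      (fun n : ℕ => -Real.log (1 + x ^ (n + 1))) from funext fun n => Real.log_inv _]
    rw [tsum_neg, Real.exp_neg]
  -- limits of partial products
  have hPt := MP.hasProd.tendsto_prod_nat
  have hQt := MQ.hasProd.tendsto_prod_nat
  have hLt := ML.hasProd.tendsto_prod_nat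
  have hL2t : Tendsto (fun N : ℕ => ∏ m ∈ range (2 * N), (1 - x ^ (m + 1))) atTop (nhds L) :=
    hLt.comp (tendsto_atTop_mono (fun n : ℕ => Nat.le_mul_of_pos_left n (by norm_num)) tendsto_id)
  have hmul : Tendsto (fun N : ℕ => (∏ n ∈ range N, (1 + x ^ (n + 1))) *
      (∏ n ∈ range N, (1 - x ^ (2 * n + 1))) * (∏ n ∈ range N, (1 - x ^ (n + 1)))) atTop
      (nhds (P * Q * L)) := (hPt.mul hQt).mul hLt
  have hmul' : Tendsto (fun N : ℕ => ∏ m ∈ range (2 * N), (1 - x ^ (m + 1))) atTop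
      (nhds (P * Q * L)) := by
    apply hmul.congr
    intro N
    exact euler_finite_id x N
  have hPQL : P * Q * L = L := tendsto_nhds_unique hmul' hL2t
  have hPQ : P * Q = 1 := by
    have h1 : P * Q * L = 1 * L := by rw [one_mul]; exact hPQL
    exact mul_right_cancel₀ hL0.ne' h1
  have hQP : Q = P⁻¹ := by
    field_simp
    linarith [hPQ]
  rw [hPinv, ← hQP, hQdef]
  apply tprod_congr
  intro j
  rw [show 2 * (j + 1) - 1 = 2 * j + 1 from by omega]
end

section
/- As g → ∞ with r fixed, the proportion of g×g matrices over F_q having rank g−r converges to q^{−r²} · ∏_{i=r+1}^∞ (1−q^{−i}) · ∏_{i=1}^r (1−q^{−i})^{−1}. -/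
open Matrix Filter

section aux
open LinearMap Submodule Module

set_option linter.unusedSectionVars false

variable {F : Type*} [Field F] [Fintype F]

lemma surj_iff_linIndep {g k : ℕ} (M : Matrix (Fin k) (Fin g) F) :
    Function.Surjective M.mulVecLin ↔ LinearIndependent F M := by
  constructor
  · intro h
    refine linearIndependent_iff_card_eq_finrank_span.2 ?_
    have : LinearMap.range M.mulVecLin = ⊤ := LinearMap.range_eq_top.2 h
    have hr : M.rank = k := by
      rw [Matrix.rank, this, finrank_top, finrank_fintype_fun_eq_card, Fintype.card_fin]
    rw [Fintype.card_fin, Set.finrank]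
    exact hr.symm.trans (Matrix.rank_eq_finrank_span_row M)
  · intro h
    rw [← LinearMap.range_eq_top]
    apply Submodule.eq_top_of_finrank_eq
    rw [← Matrix.rank, h.rank_matrix, Fintype.card_fin, finrank_fintype_fun_eq_card,
      Fintype.card_fin]

noncomputable def surjEquivLinIndep (g k : ℕ) :
    {f : (Fin g → F) →ₗ[F] (Fin k → F) // Function.Surjective f} ≃
      {s : Fin k → (Fin g → F) // LinearIndependent F s} :=
  Equiv.subtypeEquiv
    ((LinearMap.toMatrix' (R := F) (m := Fin k) (n := Fin g)).toEquiv.trans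
      (Matrix.of (m := Fin k) (n := Fin g) (α := F)).symm)
    (by
      intro f
      have : Function.Surjective f ↔ LinearIndependent F (LinearMap.toMatrix' f) := by
        rw [← surj_iff_linIndep, ← Matrix.toLin'_apply', Matrix.toLin'_toMatrix']
      exact this)

/-- for a submodule of the right rank, surjections onto it biject with surjections onto `F^k`. -/
noncomputable def surjOntoEquiv {V W : Type*} [AddCommGroup V] [Module F V]
    [AddCommGroup W] [Module F W] (e : V ≃ₗ[F] W) (g : ℕ) :
    {f : (Fin g → F) →ₗ[F] V // Function.Surjective f} ≃
      {f : (Fin g → F) →ₗ[F] W // Function.Surjective f} where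
  toFun f := ⟨e.toLinearMap ∘ₗ f.1, e.surjective.comp f.2⟩
  invFun f := ⟨e.symm.toLinearMap ∘ₗ f.1, e.symm.surjective.comp f.2⟩
  left_inv f := by ext x; simp
  right_inv f := by ext x; simp

/-- maps with range U biject with surjections onto U. -/
noncomputable def rangeEqEquiv {V : Type*} [AddCommGroup V] [Module F V]
    (U : Submodule F V) (g : ℕ) :
    {f : (Fin g → F) →ₗ[F] V // LinearMap.range f = U} ≃
      {f : (Fin g → F) →ₗ[F] U // Function.Surjective f} where
  toFun f := ⟨(f.1).codRestrict U (fun x => (le_of_eq f.2) (LinearMap.mem_range_self f.1 x)), by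
    rintro ⟨y, hy⟩
    rw [← f.2] at hy
    obtain ⟨x, hx⟩ := hy
    exact ⟨x, Subtype.ext hx⟩⟩
  invFun f := ⟨U.subtype ∘ₗ f.1, by
    rw [LinearMap.range_comp, LinearMap.range_eq_top.2 f.2, Submodule.map_subtype_top]⟩
  left_inv f := by ext x; rfl
  right_inv f := by ext x; rfl

noncomputable def linIndepCongr {V W : Type*} [AddCommGroup V] [Module F V]
    [AddCommGroup W] [Module F W] (e : V ≃ₗ[F] W) (k : ℕ) :
    {t : Fin k → V // LinearIndependent F t} ≃ {t : Fin k → W // LinearIndependent F t} where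
  toFun t := ⟨e ∘ t.1, t.2.map' e.toLinearMap e.ker⟩
  invFun t := ⟨e.symm ∘ t.1, t.2.map' e.symm.toLinearMap e.symm.ker⟩
  left_inv t := by
    apply Subtype.ext; funext i; simp
  right_inv t := by
    apply Subtype.ext; funext i; simp

noncomputable def linIndepSpanEquiv {g k : ℕ} (U : Submodule F (Fin g → F))
    (hU : finrank F U = k) :
    {s : Fin k → (Fin g → F) // LinearIndependent F s ∧ Submodule.span F (Set.range s) = U} ≃
      {t : Fin k → U // LinearIndependent F t} where
  toFun s := ⟨fun i => ⟨s.1 i, (le_of_eq s.2.2) (Submodule.subset_span ⟨i, rfl⟩)⟩,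
    LinearIndependent.of_comp U.subtype s.2.1⟩
  invFun t := ⟨fun i => (t.1 i : Fin g → F),
    t.2.map' U.subtype U.ker_subtype, by
      have h1 : Set.range (fun i => (t.1 i : Fin g → F)) = U.subtype '' Set.range t.1 := by
        rw [← Set.range_comp]; rfl
      rw [h1, ← Submodule.map_span, t.2.span_eq_top_of_card_eq_finrank'
        (by rw [Fintype.card_fin, hU]), Submodule.map_subtype_top]⟩
  left_inv s := by apply Subtype.ext; funext i; rfl
  right_inv t := by apply Subtype.ext; funext i; apply Subtype.ext; rfl

lemma card_rank_eq_mul (g k : ℕ) :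
    Nat.card {f : (Fin g → F) →ₗ[F] (Fin g → F) // finrank F (LinearMap.range f) = k} =
      Nat.card {U : Submodule F (Fin g → F) // finrank F U = k} *
        Nat.card {f : (Fin g → F) →ₗ[F] (Fin k → F) // Function.Surjective f} := by
  classical
  set Sub := {U : Submodule F (Fin g → F) // finrank F U = k} with hSub
  set φ : {f : (Fin g → F) →ₗ[F] (Fin g → F) // finrank F (LinearMap.range f) = k} → Sub :=
    fun f => ⟨LinearMap.range f.1, f.2⟩ with hφ
  have e2 : ∀ U : Sub, {f // φ f = U} ≃
      {f : (Fin g → F) →ₗ[F] (Fin k → F) // Function.Surjective f} := by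
    intro U
    let eU : U.1 ≃ₗ[F] (Fin k → F) := LinearEquiv.ofFinrankEq _ _ (by
      rw [U.2, finrank_fintype_fun_eq_card, Fintype.card_fin])
    refine Equiv.trans ?_ ((rangeEqEquiv U.1 g).trans (surjOntoEquiv eU g))
    exact {
      toFun := fun f => ⟨f.1.1, congrArg Subtype.val f.2⟩
      invFun := fun f => ⟨⟨f.1, by rw [f.2]; exact U.2⟩, Subtype.ext f.2⟩
      left_inv := fun f => Subtype.ext (Subtype.ext rfl)
      right_inv := fun f => Subtype.ext rfl }
  rw [Nat.card_congr ((Equiv.sigmaFiberEquiv φ).symm.trans (Equiv.sigmaEquivProdOfEquiv e2)),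
    Nat.card_prod]

lemma card_linIndep_eq_mul (g k : ℕ) :
    Nat.card {s : Fin k → (Fin g → F) // LinearIndependent F s} =
      Nat.card {U : Submodule F (Fin g → F) // finrank F U = k} *
        Nat.card {t : Fin k → (Fin k → F) // LinearIndependent F t} := by
  classical
  set Sub := {U : Submodule F (Fin g → F) // finrank F U = k} with hSub
  set φ : {s : Fin k → (Fin g → F) // LinearIndependent F s} → Sub :=
    fun s => ⟨Submodule.span F (Set.range s.1), by
      rw [finrank_span_eq_card s.2, Fintype.card_fin]⟩ with hφ
  have e2 : ∀ U : Sub, {s // φ s = U} ≃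
      {t : Fin k → (Fin k → F) // LinearIndependent F t} := by
    intro U
    let eU : U.1 ≃ₗ[F] (Fin k → F) := LinearEquiv.ofFinrankEq _ _ (by
      rw [U.2, finrank_fintype_fun_eq_card, Fintype.card_fin])
    refine Equiv.trans ?_ ((linIndepSpanEquiv U.1 U.2).trans (linIndepCongr eU k))
    refine Equiv.trans (Equiv.subtypeEquiv (Equiv.refl _) (fun s => ?_))
      (Equiv.subtypeSubtypeEquivSubtypeInter _ _)
    rw [Subtype.ext_iff]
    rfl
  rw [Nat.card_congr ((Equiv.sigmaFiberEquiv φ).symm.trans (Equiv.sigmaEquivProdOfEquiv e2)),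
    Nat.card_prod]

lemma card_matrix_rank_mul (g k : ℕ) (hk : k ≤ g) :
    Nat.card {M : Matrix (Fin g) (Fin g) F // M.rank = k} *
      ∏ i : Fin k, (Fintype.card F ^ k - Fintype.card F ^ (i : ℕ)) =
      (∏ i : Fin k, (Fintype.card F ^ g - Fintype.card F ^ (i : ℕ))) ^ 2 := by
  classical
  have hfg : finrank F (Fin g → F) = g := by
    rw [finrank_fintype_fun_eq_card, Fintype.card_fin]
  have hfk : finrank F (Fin k → F) = k := by
    rw [finrank_fintype_fun_eq_card, Fintype.card_fin]
  have h0 : Nat.card {M : Matrix (Fin g) (Fin g) F // M.rank = k} =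
      Nat.card {f : (Fin g → F) →ₗ[F] (Fin g → F) // finrank F (LinearMap.range f) = k} :=
    Nat.card_congr (Equiv.subtypeEquiv Matrix.toLin'.toEquiv (fun M => Iff.rfl))
  have hgk : Nat.card {s : Fin k → (Fin g → F) // LinearIndependent F s} =
      ∏ i : Fin k, (Fintype.card F ^ g - Fintype.card F ^ (i : ℕ)) := by
    rw [card_linearIndependent (by rw [hfg]; exact hk), hfg]
  have hkk : Nat.card {t : Fin k → (Fin k → F) // LinearIndependent F t} =
      ∏ i : Fin k, (Fintype.card F ^ k - Fintype.card F ^ (i : ℕ)) := by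
    rw [card_linearIndependent (by rw [hfk]), hfk]
  have hsurj : Nat.card {f : (Fin g → F) →ₗ[F] (Fin k → F) // Function.Surjective f} =
      ∏ i : Fin k, (Fintype.card F ^ g - Fintype.card F ^ (i : ℕ)) := by
    rw [Nat.card_congr (surjEquivLinIndep g k), hgk]
  have hsub := card_linIndep_eq_mul (F := F) g k
  rw [hgk, hkk] at hsub
  rw [h0, card_rank_eq_mul, hsurj, sq, mul_assoc, mul_comm
    (∏ i : Fin k, (Fintype.card F ^ g - Fintype.card F ^ (i : ℕ))), ← mul_assoc, ← hsub,
    mul_comm]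

lemma cast_prod_pow (q : ℕ) (hq : 1 ≤ q) {m n : ℕ} (h : n ≤ m) :
    ((∏ i : Fin n, (q ^ m - q ^ (i : ℕ)) : ℕ) : ℝ) =
      (q : ℝ) ^ (m * n) * ∏ j ∈ Finset.range n, (1 - ((q : ℝ)⁻¹) ^ (m - j)) := by
  have hq0 : (q : ℝ) ≠ 0 := by positivity
  rw [Fin.prod_univ_eq_prod_range (fun j => q ^ m - q ^ j) n, Nat.cast_prod]
  have hterm : ∀ j ∈ Finset.range n, ((q ^ m - q ^ j : ℕ) : ℝ) =
      (q : ℝ) ^ m * (1 - ((q : ℝ)⁻¹) ^ (m - j)) := by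
    intro j hj
    have hjm : j ≤ m := le_trans (le_of_lt (Finset.mem_range.1 hj)) h
    rw [Nat.cast_sub (Nat.pow_le_pow_right hq hjm)]
    push_cast
    have hsplit : (q : ℝ) ^ m = (q : ℝ) ^ j * (q : ℝ) ^ (m - j) := by
      rw [← pow_add]
      congr 1
      omega
    rw [mul_sub, mul_one, hsplit, inv_pow, mul_assoc,
      mul_inv_cancel₀ (by positivity : ((q : ℝ) ^ (m - j)) ≠ 0), mul_one]
  rw [Finset.prod_congr rfl hterm, Finset.prod_mul_distrib, Finset.prod_const,
    Finset.card_range, ← pow_mul]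

end aux

section aux2
open Submodule Module

/-- As `g → ∞` with `r` fixed, the proportion of `g×g` matrices over `F_q` of rank `g−r`
converges to `q^{−r²} · ∏_{i=r+1}^∞ (1−q^{−i}) · ∏_{i=1}^r (1−q^{−i})^{−1}`. -/
theorem stmt12 (F : Type*) [Field F] [Fintype F] (r : ℕ) :
    Tendsto (fun g : ℕ =>
      (Nat.card {M : Matrix (Fin g) (Fin g) F // M.rank = g - r} : ℝ) /
        (Fintype.card F : ℝ) ^ (g * g))
      atTop
      (nhds (((Fintype.card F : ℝ)⁻¹) ^ (r ^ 2) *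
        (∏' i : ℕ, (1 - (Fintype.card F : ℝ)⁻¹ ^ (r + 1 + i))) *
        ∏ i ∈ Finset.range r, (1 - (Fintype.card F : ℝ)⁻¹ ^ (i + 1))⁻¹)) := by
  have hq : 1 < Fintype.card F := Fintype.one_lt_card
  set q : ℕ := Fintype.card F with hqdef
  set x : ℝ := (q : ℝ)⁻¹ with hxdef
  have hq1 : (1 : ℝ) < (q : ℝ) := by exact_mod_cast hq
  have hq0 : (0 : ℝ) < (q : ℝ) := by linarith
  have hx0 : 0 < x := by positivity
  have hx1 : x < 1 := by
    rw [hxdef, inv_lt_one_iff₀]; right; exact hq1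
  have hxpow1 : ∀ n : ℕ, 1 ≤ n → x ^ n < 1 := fun n hn => pow_lt_one₀ hx0.le hx1 (by omega)
  have hfac : ∀ n : ℕ, 1 ≤ n → 0 < 1 - x ^ n := fun n hn => by
    have := hxpow1 n hn; linarith
  -- the building blocks
  set A : ℕ → ℝ := fun n => ∏ j ∈ Finset.range n, (1 - x ^ (r + 1 + j)) with hAdef
  set B : ℝ := ∏ j ∈ Finset.range r, (1 - x ^ (1 + j)) with hBdef
  set C : ℕ → ℝ := fun g => ∏ j ∈ Finset.range r, (1 - x ^ (r + 1 + (g - 2 * r + j))) with hCdef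
  have hApos : ∀ n, 0 < A n := by
    intro n
    apply Finset.prod_pos
    intro j _
    exact hfac _ (by omega)
  have hBpos : 0 < B := by
    apply Finset.prod_pos
    intro j _
    exact hfac _ (by omega)
  -- multipliability
  have hslog : Summable (fun j : ℕ => Real.log (1 - x ^ (r + 1 + j))) := by
    have hxn : ∀ j : ℕ, 0 < x ^ (r + 1 + j) := fun j => pow_pos hx0 _
    have hlex : ∀ j : ℕ, x ^ (r + 1 + j) ≤ x := by
      intro j
      calc x ^ (r + 1 + j) ≤ x ^ 1 := by
            apply pow_le_pow_of_le_one hx0.le hx1.le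
            omega
        _ = x := pow_one x
    have h1x : 0 < 1 - x := by linarith
    apply Summable.of_abs
    have hsum : Summable (fun j : ℕ => (1 - x)⁻¹ * x ^ (r + 1 + j)) := by
      apply Summable.mul_left
      have : Summable (fun j : ℕ => x ^ (r + 1) * x ^ j) :=
        (summable_geometric_of_lt_one hx0.le hx1).mul_left _
      apply this.congr
      intro j
      rw [← pow_add]
    apply Summable.of_nonneg_of_le (fun j => abs_nonneg _) _ hsum
    intro j
    set t := x ^ (r + 1 + j) with ht
    have ht0 : 0 < t := hxn j
    have htx : t ≤ x := hlex j
    have h1t : 0 < 1 - t := by linarith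
    have hlog : Real.log (1 - t) ≤ 0 := Real.log_nonpos (by linarith) (by linarith)
    rw [abs_of_nonpos hlog, ← Real.log_inv]
    calc Real.log (1 - t)⁻¹ ≤ (1 - t)⁻¹ - 1 :=
          Real.log_le_sub_one_of_pos (by positivity)
      _ = t / (1 - t) := by field_simp; ring
      _ ≤ t / (1 - x) := by gcongr
      _ = (1 - x)⁻¹ * t := by rw [div_eq_inv_mul]
  have hmult : Multipliable (fun j : ℕ => 1 - x ^ (r + 1 + j)) :=
    Real.multipliable_of_summable_log (fun j => hfac _ (by omega)) hslog
  set P : ℝ := ∏' j : ℕ, (1 - x ^ (r + 1 + j)) with hPdef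
  -- Tendsto of A (g - 2r)
  have hA : Tendsto (fun g : ℕ => A (g - 2 * r)) atTop (nhds P) :=
    hmult.hasProd.tendsto_prod_nat.comp (tendsto_sub_atTop_nat (2 * r))
  -- Tendsto of C
  have hC : Tendsto C atTop (nhds 1) := by
    have : Tendsto C atTop (nhds (∏ j ∈ Finset.range r, (1 : ℝ))) := by
      apply tendsto_finset_prod
      intro j _
      have h1 : Tendsto (fun g : ℕ => x ^ (r + 1 + (g - 2 * r + j))) atTop (nhds 0) := by
        apply squeeze_zero (fun g => by positivity)
          (g := fun g : ℕ => x ^ (g - 2 * r))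
        · intro g
          apply pow_le_pow_of_le_one hx0.le hx1.le
          omega
        · exact (tendsto_pow_atTop_nhds_zero_of_lt_one hx0.le hx1).comp
            (tendsto_sub_atTop_nat (2 * r))
      have := h1.const_sub 1
      simpa using this
    simpa using this
  -- key identity
  have key : ∀ g : ℕ, 2 * r ≤ g →
      (Nat.card {M : Matrix (Fin g) (Fin g) F // M.rank = g - r} : ℝ) / (q : ℝ) ^ (g * g)
        = x ^ (r ^ 2) * (A (g - 2 * r) * (C g) ^ 2) * B⁻¹ := by
    intro g hg
    have hkg : g - r ≤ g := Nat.sub_le g r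
    set k : ℕ := g - r with hk
    have hgkr : g = k + r := by omega
    have hcount := card_matrix_rank_mul (F := F) g k hkg
    have hR : (Nat.card {M : Matrix (Fin g) (Fin g) F // M.rank = k} : ℝ) *
        ((∏ i : Fin k, (q ^ k - q ^ (i : ℕ)) : ℕ) : ℝ) =
        (((∏ i : Fin k, (q ^ g - q ^ (i : ℕ)) : ℕ) : ℝ)) ^ 2 := by
      exact_mod_cast congrArg (Nat.cast : ℕ → ℝ) hcount
    rw [cast_prod_pow q (by omega) (le_refl k), cast_prod_pow q (by omega) hkg] at hR
    -- reindex the two products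
    have hAgk : (∏ j ∈ Finset.range k, (1 - x ^ (g - j))) = A (g - 2 * r) * C g := by
      have h1 : (∏ j ∈ Finset.range k, (1 - x ^ (g - j))) =
          ∏ j ∈ Finset.range k, (1 - x ^ (r + 1 + (k - 1 - j))) := by
        apply Finset.prod_congr rfl
        intro j hj
        rw [Finset.mem_range] at hj
        congr 2
        omega
      rw [h1, Finset.prod_range_reflect (fun j => 1 - x ^ (r + 1 + j)) k]
      have h2 : k = (g - 2 * r) + r := by omega
      rw [h2, Finset.prod_range_add]
    have hBk : (∏ j ∈ Finset.range k, (1 - x ^ (k - j))) = B * A (g - 2 * r) := by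
      have h1 : (∏ j ∈ Finset.range k, (1 - x ^ (k - j))) =
          ∏ j ∈ Finset.range k, (1 - x ^ (1 + (k - 1 - j))) := by
        apply Finset.prod_congr rfl
        intro j hj
        rw [Finset.mem_range] at hj
        congr 2
        omega
      rw [h1, Finset.prod_range_reflect (fun j => 1 - x ^ (1 + j)) k]
      have h2 : k = r + (g - 2 * r) := by omega
      rw [h2, Finset.prod_range_add]
      congr 1
      apply Finset.prod_congr rfl
      intro j _
      congr 2
      omega
    rw [hAgk, hBk] at hR
    -- now solve for the card and compute
    set a : ℝ := A (g - 2 * r) with ha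
    set c : ℝ := C g with hc
    have ha0 : a ≠ 0 := (hApos _).ne'
    have hB0 : B ≠ 0 := hBpos.ne'
    have hQ0 : (q : ℝ) ≠ 0 := by positivity
    have hcard : (Nat.card {M : Matrix (Fin g) (Fin g) F // M.rank = k} : ℝ) =
        ((q : ℝ) ^ (g * k) * (a * c)) ^ 2 / ((q : ℝ) ^ (k * k) * (B * a)) := by
      rw [eq_div_iff (by positivity)]
      linarith [hR]
    rw [hcard]
    rw [hxdef, inv_pow]
    have hpow : ((q : ℝ) ^ (g * k)) ^ 2 * (q:ℝ) ^ (r ^ 2) = (q : ℝ) ^ (k * k) * (q : ℝ) ^ (g * g) := by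
      rw [← pow_mul, ← pow_add, ← pow_add]
      congr 1
      rw [hgkr]
      ring
    field_simp
    linear_combination (c ^ 2) * hpow
  -- conclude
  have hlim : Tendsto (fun g : ℕ => x ^ (r ^ 2) * (A (g - 2 * r) * (C g) ^ 2) * B⁻¹) atTop
      (nhds (x ^ (r ^ 2) * (P * 1 ^ 2) * B⁻¹)) := by
    exact (((hA.mul (hC.pow 2)).const_mul _).mul_const _)
  have heq : (fun g : ℕ => x ^ (r ^ 2) * (A (g - 2 * r) * (C g) ^ 2) * B⁻¹) =ᶠ[atTop]
      (fun g : ℕ =>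
        (Nat.card {M : Matrix (Fin g) (Fin g) F // M.rank = g - r} : ℝ) /
          (Fintype.card F : ℝ) ^ (g * g)) := by
    filter_upwards [eventually_ge_atTop (2 * r)] with g hg
    rw [← key g hg]
  have := hlim.congr' heq
  convert this using 2
  rw [one_pow, mul_one, hBdef, ← Finset.prod_inv_distrib]
  congr 1
  apply Finset.prod_congr rfl
  intro j _
  rw [add_comm j 1]

end aux2
end
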